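/- arXiv:1608.07054 — 3 statements merged into one kernel-verified Lean document; each statement's English description precedes it below -/
import Mathlib

section
/- Let S be a real symmetric n×n matrix of signature (1, n−1), C = {x ∈ ℝⁿ : xᵀSx ≥ 0, h·x ≥ 0} the positive cone with respect to a vector h satisfying hᵀSh > 0, and let C≤1 = C ∩ {x : hᵀSx ≤ 1}. Then the Lebesgue volume of C≤1 equals Vₙ / (√|det S| · (hᵀSh)^{n/2}), where Vₙ is the volume of {x ∈ ℝⁿ : 0 ≤ x₁ ≤ 1, x₁² − x₂² − ⋯ − xₙ² ≥ 0}. -/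
open MeasureTheory Matrix Finset

namespace VolConeAux

variable {n : ℕ}

noncomputable def boost (hn : 0 < n) (w : Fin n → ℝ) : Matrix (Fin n) (Fin n) ℝ :=
  fun i j =>
    if i = (⟨0, hn⟩ : Fin n) then w j
    else if j = (⟨0, hn⟩ : Fin n) then w i
    else (if i = j then (1:ℝ) else 0) + w i * w j / (1 + w ⟨0, hn⟩)

lemma boost_apply_left (hn : 0 < n) (w : Fin n → ℝ) (j : Fin n) :
    boost hn w ⟨0, hn⟩ j = w j := by simp [boost]

lemma boost_apply_right (hn : 0 < n) (w : Fin n → ℝ) (i : Fin n) :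
    boost hn w i ⟨0, hn⟩ = w i := by
  rcases eq_or_ne i (⟨0, hn⟩ : Fin n) with rfl | hi
  · simp [boost]
  · simp [boost, hi]

lemma boost_apply_other (hn : 0 < n) (w : Fin n → ℝ) {i j : Fin n}
    (hi : i ≠ (⟨0, hn⟩ : Fin n)) (hj : j ≠ (⟨0, hn⟩ : Fin n)) :
    boost hn w i j = (if i = j then (1:ℝ) else 0) + w i * w j / (1 + w ⟨0, hn⟩) := by
  simp [boost, hi, hj]

lemma boost_transpose (hn : 0 < n) (w : Fin n → ℝ) : (boost hn w)ᵀ = boost hn w := by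
  ext i j
  show boost hn w j i = boost hn w i j
  rcases eq_or_ne i (⟨0, hn⟩ : Fin n) with rfl | hi <;>
    rcases eq_or_ne j (⟨0, hn⟩ : Fin n) with rfl | hj
  · rfl
  · rw [boost_apply_right, boost_apply_left]
  · rw [boost_apply_left, boost_apply_right]
  · rw [boost_apply_other hn w hj hi, boost_apply_other hn w hi hj]
    rcases eq_or_ne i j with rfl | hij
    · ring
    · rw [if_neg hij, if_neg (Ne.symm hij)]; ring

lemma boost_mul_D_mul_boost (hn : 0 < n) (w : Fin n → ℝ)
    (hr : ∑ k ∈ Finset.univ \ {(⟨0, hn⟩ : Fin n)}, w k ^ 2 = w ⟨0, hn⟩ ^ 2 - 1)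
    (hd : 0 < 1 + w ⟨0, hn⟩) :
    boost hn w * Matrix.diagonal (fun i => if i = (⟨0, hn⟩ : Fin n) then (1 : ℝ) else -1) *
      boost hn w =
    Matrix.diagonal (fun i => if i = (⟨0, hn⟩ : Fin n) then (1 : ℝ) else -1) := by
  set i0 : Fin n := ⟨0, hn⟩ with hi0
  set s : Finset (Fin n) := Finset.univ \ {i0} with hs
  have hd' : 1 + w i0 ≠ 0 := ne_of_gt hd
  have hmem : ∀ k : Fin n, k ∈ s ↔ k ≠ i0 := by
    intro k; simp [hs]
  have hentry : ∀ i j, (boost hn w * Matrix.diagonal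
      (fun i => if i = i0 then (1:ℝ) else -1) * boost hn w) i j
      = w i * w j - ∑ k ∈ s, boost hn w i k * boost hn w k j := by
    intro i j
    rw [Matrix.mul_apply]
    rw [Finset.sum_eq_sum_sdiff_singleton_add (Finset.mem_univ i0)]
    have h1 : ∀ k ∈ s, (boost hn w * Matrix.diagonal (fun i => if i = i0 then (1:ℝ) else -1)) i k
        * boost hn w k j = -(boost hn w i k * boost hn w k j) := by
      intro k hk
      have hk' : k ≠ i0 := (hmem k).1 hk
      rw [Matrix.mul_diagonal, if_neg hk']
      ring
    rw [Finset.sum_congr rfl h1, Matrix.mul_diagonal, if_pos rfl, boost_apply_right,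
      boost_apply_left, Finset.sum_neg_distrib]
    ring
  ext i j
  rw [hentry i j]
  rcases eq_or_ne i i0 with rfl | hi <;> rcases eq_or_ne j i0 with rfl | hj
  · -- i = i0, j = i0
    have h2 : ∀ k ∈ s, boost hn w i0 k * boost hn w k i0 = w k ^ 2 := by
      intro k _; rw [boost_apply_left, boost_apply_right]; ring
    rw [Finset.sum_congr rfl h2, hr, Matrix.diagonal_apply_eq, if_pos rfl]
    ring
  · -- i = i0, j ≠ i0
    have h2 : ∀ k ∈ s, boost hn w i0 k * boost hn w k j
        = (if k = j then w k else 0) + w k ^ 2 * (w j / (1 + w i0)) := by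
      intro k hk
      rw [boost_apply_left, boost_apply_other hn w ((hmem k).1 hk) hj]
      rcases eq_or_ne k j with rfl | hkj
      · rw [if_pos rfl, if_pos rfl]; ring
      · rw [if_neg hkj, if_neg hkj]; ring
    rw [Finset.sum_congr rfl h2, Finset.sum_add_distrib, Finset.sum_ite_eq' s j (fun k => w k),
      if_pos ((hmem j).2 hj), ← Finset.sum_mul, hr]
    rw [Matrix.diagonal_apply_ne _ (Ne.symm hj)]
    field_simp
    ring
  · -- i ≠ i0, j = i0
    have h2 : ∀ k ∈ s, boost hn w i k * boost hn w k i0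
        = (if i = k then w k else 0) + w k ^ 2 * (w i / (1 + w i0)) := by
      intro k hk
      rw [boost_apply_right, boost_apply_other hn w hi ((hmem k).1 hk)]
      rcases eq_or_ne i k with rfl | hik
      · rw [if_pos rfl, if_pos rfl]; ring
      · rw [if_neg hik, if_neg hik]; ring
    rw [Finset.sum_congr rfl h2, Finset.sum_add_distrib, Finset.sum_ite_eq s i (fun k => w k),
      if_pos ((hmem i).2 hi), ← Finset.sum_mul, hr]
    rw [Matrix.diagonal_apply_ne _ hi]
    field_simp
    ring
  · -- i ≠ i0, j ≠ i0
    have h2 : ∀ k ∈ s, boost hn w i k * boost hn w k j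
        = ((if i = k then w k else 0) * (w j / (1 + w i0))
            + ((if k = j then w k else 0) * (w i / (1 + w i0))
            + (if i = k then (1:ℝ) else 0) * (if k = j then 1 else 0)))
          + w k ^ 2 * (w i * w j / ((1 + w i0) * (1 + w i0))) := by
      intro k hk
      rw [boost_apply_other hn w hi ((hmem k).1 hk), boost_apply_other hn w ((hmem k).1 hk) hj]
      rcases eq_or_ne i k with hik | hik <;> rcases eq_or_ne k j with hkj | hkj
      · simp only [if_pos hik, if_pos hkj]; rw [hik, hkj]; field_simp [show (1 + w ⟨0, hn⟩) ≠ 0 from hd']; ring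
      · simp only [if_pos hik, if_neg hkj]; rw [hik]; field_simp [show (1 + w ⟨0, hn⟩) ≠ 0 from hd']; ring
      · simp only [if_neg hik, if_pos hkj]; rw [hkj]; field_simp [show (1 + w ⟨0, hn⟩) ≠ 0 from hd']; ring
      · simp only [if_neg hik, if_neg hkj]; field_simp [show (1 + w ⟨0, hn⟩) ≠ 0 from hd']; ring
    have f1 : ∑ k ∈ s, (if i = k then w k else 0) * (w j / (1 + w i0))
        = w i * (w j / (1 + w i0)) := by
      rw [← Finset.sum_mul, Finset.sum_ite_eq s i (fun k => w k), if_pos ((hmem i).2 hi)]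
    have f2 : ∑ k ∈ s, (if k = j then w k else 0) * (w i / (1 + w i0))
        = w j * (w i / (1 + w i0)) := by
      rw [← Finset.sum_mul, Finset.sum_ite_eq' s j (fun k => w k), if_pos ((hmem j).2 hj)]
    have f3 : ∑ k ∈ s, w k ^ 2 * (w i * w j / ((1 + w i0) * (1 + w i0)))
        = (w i0 ^ 2 - 1) * (w i * w j / ((1 + w i0) * (1 + w i0))) := by
      rw [← Finset.sum_mul, hr]
    rw [Finset.sum_congr rfl h2, Finset.sum_add_distrib, Finset.sum_add_distrib,
      Finset.sum_add_distrib, f1, f2, f3]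
    have e1 : ∑ k ∈ s, (if i = k then (1:ℝ) else 0) * (if k = j then 1 else 0)
        = if i = j then 1 else 0 := by
      rcases eq_or_ne i j with rfl | hij
      · rw [Finset.sum_eq_single i]
        · simp
        · intro k _ hk; rw [if_neg (fun hh => hk hh.symm)]; ring
        · intro hni; exact absurd ((hmem i).2 hi) hni
      · rw [if_neg hij, Finset.sum_eq_zero]
        intro k _
        rcases eq_or_ne i k with rfl | hik
        · rw [if_neg hij]; ring
        · rw [if_neg hik]; ring
    rw [e1]
    rcases eq_or_ne i j with rfl | hij
    · rw [Matrix.diagonal_apply_eq, if_neg hi, if_pos rfl]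
      field_simp
      ring
    · rw [Matrix.diagonal_apply_ne _ hij, if_neg hij]
      field_simp
      ring


end VolConeAux

open VolConeAux

set_option maxHeartbeats 2000000 in
theorem volume_positive_cone (n : ℕ) (hn : 0 < n)
    (S : Matrix (Fin n) (Fin n) ℝ) (hS : S.IsSymm)
    -- S has Lorentzian signature (1, n-1): it is diagonalizable to diag(1,-1,…,-1)
    (T : Matrix (Fin n) (Fin n) ℝ) (hT : IsUnit T.det)
    (hdiag : Tᵀ * S * T =
      Matrix.diagonal (fun i => if i = (⟨0, hn⟩ : Fin n) then (1 : ℝ) else -1))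
    (h : Fin n → ℝ) (hpos : 0 < dotProduct h (S.mulVec h)) :
    volume {x : Fin n → ℝ |
        0 ≤ dotProduct x (S.mulVec x) ∧
        0 ≤ dotProduct h (S.mulVec x) ∧
        dotProduct h (S.mulVec x) ≤ 1}
      = ENNReal.ofReal
          ((volume {x : Fin n → ℝ |
              0 ≤ x ⟨0, hn⟩ ∧ x ⟨0, hn⟩ ≤ 1 ∧
              0 ≤ (x ⟨0, hn⟩)^2 - ∑ i ∈ Finset.univ \ {(⟨0, hn⟩ : Fin n)}, (x i)^2}).toReal
            / (Real.sqrt |S.det| * (dotProduct h (S.mulVec h)) ^ ((n : ℝ) / 2))) := by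
  classical
  set i0 : Fin n := ⟨0, hn⟩ with hi0def
  set D : Matrix (Fin n) (Fin n) ℝ :=
    Matrix.diagonal (fun i => if i = i0 then (1:ℝ) else -1) with hDdef
  set c : ℝ := dotProduct h (S.mulVec h) with hcdef
  have hc0 : 0 < c := hpos
  set sq : ℝ := Real.sqrt c with hsqdef
  have hsq0 : 0 < sq := Real.sqrt_pos.2 hc0
  have hsqc : sq ^ 2 = c := Real.sq_sqrt hc0.le
  -- the quadratic form of D
  have hQ : ∀ y : Fin n → ℝ, y ⬝ᵥ (D *ᵥ y)
      = y i0 ^ 2 - ∑ k ∈ Finset.univ \ {i0}, y k ^ 2 := by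
    intro y
    have e1 : y ⬝ᵥ (D *ᵥ y) = ∑ i, y i * ((if i = i0 then (1:ℝ) else -1) * y i) := by
      simp [dotProduct, hDdef, Matrix.mulVec_diagonal]
    rw [e1, Finset.sum_eq_sum_sdiff_singleton_add (Finset.mem_univ i0), if_pos rfl]
    have e2 : ∀ k ∈ Finset.univ \ {i0}, y k * ((if k = i0 then (1:ℝ) else -1) * y k)
        = -(y k ^ 2) := by
      intro k hk
      have hk' : k ≠ i0 := by simpa using hk
      rw [if_neg hk']; ring
    rw [Finset.sum_congr rfl e2, Finset.sum_neg_distrib]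
    ring
  -- swap lemma
  have hswap : ∀ (A : Matrix (Fin n) (Fin n) ℝ) (x y : Fin n → ℝ),
      (A *ᵥ x) ⬝ᵥ y = x ⬝ᵥ (Aᵀ *ᵥ y) := by
    intro A x y
    rw [dotProduct_comm, dotProduct_mulVec, ← Matrix.mulVec_transpose, dotProduct_comm]
  -- basic matrices
  have hTg : T *ᵥ (T⁻¹ *ᵥ h) = h := by
    rw [Matrix.mulVec_mulVec, Matrix.mul_nonsing_inv _ hT, Matrix.one_mulVec]
  set g : Fin n → ℝ := T⁻¹ *ᵥ h with hgdef
  have hTS : Tᵀ * S = D * T⁻¹ := by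
    calc Tᵀ * S = Tᵀ * S * (T * T⁻¹) := by
          rw [Matrix.mul_nonsing_inv _ hT, Matrix.mul_one]
    _ = (Tᵀ * S * T) * T⁻¹ := by rw [Matrix.mul_assoc (Tᵀ * S)]
    _ = D * T⁻¹ := by rw [hdiag]
  have hk1 : Tᵀ *ᵥ (S *ᵥ h) = D *ᵥ g := by
    rw [Matrix.mulVec_mulVec, hTS, ← Matrix.mulVec_mulVec]
  have hgDg : g ⬝ᵥ (D *ᵥ g) = c := by
    rw [← hk1, ← hswap T g (S *ᵥ h), hTg]
  -- the unit timelike vector w with nonnegative first coordinate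
  set u : Fin n → ℝ := sq⁻¹ • g with hudef
  set ε : ℝ := if 0 ≤ u i0 then 1 else -1 with hεdef
  have hε : ε * ε = 1 := by
    by_cases h0 : 0 ≤ u i0 <;> simp [hεdef, h0]
  set w : Fin n → ℝ := ε • u with hwdef
  have hg_w : g = (sq * ε) • w := by
    rw [hwdef, hudef, smul_smul, smul_smul]
    have e1 : sq * ε * ε * sq⁻¹ = 1 := by
      have : sq * ε * ε * sq⁻¹ = (ε * ε) * (sq * sq⁻¹) := by ring
      rw [this, hε, mul_inv_cancel₀ (ne_of_gt hsq0), one_mul]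
    rw [e1, one_smul]
  have hwi0 : 0 ≤ w i0 := by
    by_cases h0 : 0 ≤ u i0
    · have : ε = 1 := if_pos h0
      simp [hwdef, this, h0]
    · push_neg at h0
      have : ε = -1 := if_neg (not_le.2 h0)
      simp [hwdef, this]
      linarith
  have hd : 0 < 1 + w i0 := by linarith
  have hwDw : w ⬝ᵥ (D *ᵥ w) = 1 := by
    have e1 : g ⬝ᵥ (D *ᵥ g) = (sq * ε) * ((sq * ε) * (w ⬝ᵥ (D *ᵥ w))) := by
      rw [hg_w, smul_dotProduct, Matrix.mulVec_smul, dotProduct_smul]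
      simp [smul_eq_mul]
    rw [hgDg] at e1
    have e2 : (sq * ε) * ((sq * ε) * (w ⬝ᵥ (D *ᵥ w)))
        = sq ^ 2 * (ε * ε) * (w ⬝ᵥ (D *ᵥ w)) := by ring
    rw [e2, hε, hsqc, mul_one] at e1
    have := mul_left_cancel₀ (ne_of_gt hc0) (e1.symm.trans (mul_one c).symm)
    exact this
  have hr : ∑ k ∈ Finset.univ \ {i0}, w k ^ 2 = w i0 ^ 2 - 1 := by
    have := hQ w
    rw [hwDw] at this
    linarith
  -- the boost
  set B : Matrix (Fin n) (Fin n) ℝ := boost hn w with hBdef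
  have hBt : Bᵀ = B := boost_transpose hn w
  have hBDB : B * D * B = D := boost_mul_D_mul_boost hn w hr hd
  have hBw : B *ᵥ Pi.single i0 1 = w := by
    rw [Matrix.mulVec_single_one, ← hBt]
    funext i
    exact boost_apply_left hn w i
  have hDe : D *ᵥ Pi.single i0 1 = Pi.single i0 1 := by
    funext i
    rw [hDdef, Matrix.mulVec_diagonal]
    rcases eq_or_ne i i0 with rfl | hi
    · simp
    · simp [hi, Pi.single_apply]
  have hBDw : B *ᵥ (D *ᵥ w) = Pi.single i0 1 := by
    have h1 : B *ᵥ (D *ᵥ (B *ᵥ Pi.single i0 1)) = D *ᵥ Pi.single i0 1 := by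
      rw [Matrix.mulVec_mulVec, Matrix.mulVec_mulVec, hBDB]
    rw [hBw, hDe] at h1
    exact h1
  -- the linear change of variables
  set M : Matrix (Fin n) (Fin n) ℝ := (ε * sq⁻¹) • (T * B) with hMdef
  have hα : Mᵀ *ᵥ (S *ᵥ h) = Pi.single i0 1 := by
    rw [hMdef, Matrix.transpose_smul, Matrix.transpose_mul, hBt, Matrix.smul_mulVec,
      ← Matrix.mulVec_mulVec, hk1, hg_w, Matrix.mulVec_smul, Matrix.mulVec_smul, hBDw,
      smul_smul]
    have e1 : ε * sq⁻¹ * (sq * ε) = 1 := by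
      have : ε * sq⁻¹ * (sq * ε) = (ε * ε) * (sq⁻¹ * sq) := by ring
      rw [this, hε, inv_mul_cancel₀ (ne_of_gt hsq0), one_mul]
    rw [e1, one_smul]
  have hβ : Mᵀ * S * M = (sq⁻¹ * sq⁻¹) • D := by
    rw [hMdef, Matrix.transpose_smul, Matrix.transpose_mul, hBt, Matrix.smul_mul,
      Matrix.smul_mul, Matrix.mul_smul, smul_smul]
    have e1 : B * Tᵀ * S * (T * B) = B * (Tᵀ * S * T) * B := by
      simp only [Matrix.mul_assoc]
    rw [e1, hdiag, hBDB]
    have e2 : ε * sq⁻¹ * (ε * sq⁻¹) = (ε * ε) * (sq⁻¹ * sq⁻¹) := by ring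
    rw [e2, hε, one_mul]
  -- the two quadratic quantities along M
  have hq : ∀ y : Fin n → ℝ, (M *ᵥ y) ⬝ᵥ (S *ᵥ (M *ᵥ y))
      = (sq⁻¹ * sq⁻¹) * (y ⬝ᵥ (D *ᵥ y)) := by
    intro y
    rw [hswap M y (S *ᵥ (M *ᵥ y)), Matrix.mulVec_mulVec, Matrix.mulVec_mulVec,
      hβ, Matrix.smul_mulVec, dotProduct_smul, smul_eq_mul]
  have hl : ∀ y : Fin n → ℝ, h ⬝ᵥ (S *ᵥ (M *ᵥ y)) = y i0 := by
    intro y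
    rw [Matrix.mulVec_mulVec, dotProduct_mulVec, ← Matrix.mulVec_transpose,
      Matrix.transpose_mul, hS.eq, ← Matrix.mulVec_mulVec, hα, single_dotProduct,
      one_mul]
  -- determinant facts
  have hDdet : |D.det| = 1 := by
    rw [hDdef, Matrix.det_diagonal, Finset.abs_prod]
    apply Finset.prod_eq_one
    intro i _
    rcases eq_or_ne i i0 with rfl | hi
    · simp
    · simp [hi]
  have hDdet0 : D.det ≠ 0 := by
    intro h0
    rw [h0, abs_zero] at hDdet
    norm_num at hDdet
  have hBdet2 : B.det ^ 2 = 1 := by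
    have e1 : (B * D * B).det = D.det := by rw [hBDB]
    rw [Matrix.det_mul, Matrix.det_mul] at e1
    have e2 : D.det * (B.det ^ 2 - 1) = 0 := by linear_combination e1
    rcases mul_eq_zero.1 e2 with h0 | h0
    · exact absurd h0 hDdet0
    · linarith
  have hBdetabs : |B.det| = 1 := by
    have : (B.det - 1) * (B.det + 1) = 0 := by linear_combination hBdet2
    rcases mul_eq_zero.1 this with h0 | h0
    · rw [show B.det = 1 by linarith]; norm_num
    · rw [show B.det = -1 by linarith]; norm_num
  have hBdet0 : B.det ≠ 0 := by
    intro h0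
    rw [h0] at hBdet2
    norm_num at hBdet2
  have hTdet0 : T.det ≠ 0 := hT.ne_zero
  have hMdet : |M.det| = sq⁻¹ ^ n * (|T.det| * |B.det|) := by
    rw [hMdef, Matrix.det_smul, Matrix.det_mul, abs_mul, abs_pow, abs_mul, abs_mul]
    have hεabs : |ε| = 1 := by
      by_cases h0 : 0 ≤ u i0 <;> simp [hεdef, h0]
    rw [hεabs, one_mul, abs_inv, abs_of_pos hsq0]
    simp [Fintype.card_fin]
  have hMdet0 : M.det ≠ 0 := by
    intro h0
    rw [h0, abs_zero] at hMdet
    have : sq⁻¹ ^ n * (|T.det| * |B.det|) ≠ 0 := by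
      apply mul_ne_zero
      · exact pow_ne_zero _ (inv_ne_zero (ne_of_gt hsq0))
      · exact mul_ne_zero (abs_ne_zero.2 hTdet0) (abs_ne_zero.2 hBdet0)
    exact this hMdet.symm
  -- surjectivity
  have hsurj : Function.Surjective (fun y : Fin n → ℝ => M *ᵥ y) := by
    intro x
    refine ⟨M⁻¹ *ᵥ x, ?_⟩
    show M *ᵥ (M⁻¹ *ᵥ x) = x
    rw [Matrix.mulVec_mulVec, Matrix.mul_nonsing_inv _ (isUnit_iff_ne_zero.2 hMdet0),
      Matrix.one_mulVec]
  -- the model set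
  set E : Set (Fin n → ℝ) := {x : Fin n → ℝ |
      0 ≤ x i0 ∧ x i0 ≤ 1 ∧
      0 ≤ (x i0)^2 - ∑ i ∈ Finset.univ \ {i0}, (x i)^2} with hEdef
  set A : Set (Fin n → ℝ) := {x : Fin n → ℝ |
      0 ≤ dotProduct x (S.mulVec x) ∧
      0 ≤ dotProduct h (S.mulVec x) ∧
      dotProduct h (S.mulVec x) ≤ 1} with hAdef
  have hpos2 : 0 < sq⁻¹ * sq⁻¹ := mul_pos (inv_pos.2 hsq0) (inv_pos.2 hsq0)
  have hiff : ∀ y : Fin n → ℝ, M *ᵥ y ∈ A ↔ y ∈ E := by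
    intro y
    rw [hAdef, hEdef, Set.mem_setOf_eq, Set.mem_setOf_eq]
    have e1 := hq y
    rw [hQ y] at e1
    rw [e1, hl y]
    constructor
    · rintro ⟨a1, a2, a3⟩
      refine ⟨a2, a3, ?_⟩
      nlinarith
    · rintro ⟨a1, a2, a3⟩
      exact ⟨mul_nonneg hpos2.le a3, a1, a2⟩
  have hpre : (fun y : Fin n → ℝ => M *ᵥ y) ⁻¹' A = E := Set.ext hiff
  have himg : A = (fun y : Fin n → ℝ => M *ᵥ y) '' E := by
    rw [← hpre, Set.image_preimage_eq A hsurj]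
  -- finiteness of the model volume
  have hEfin : volume E ≠ ⊤ := by
    have hsub : E ⊆ Set.pi Set.univ (fun _ : Fin n => Set.Icc (-1:ℝ) 1) := by
      intro y hy
      obtain ⟨a1, a2, a3⟩ := hy
      intro i _
      rcases eq_or_ne i i0 with rfl | hi
      · exact ⟨by linarith, a2⟩
      · have hmemi : i ∈ Finset.univ \ {i0} := by simp [hi]
        have h1 : y i ^ 2 ≤ ∑ k ∈ Finset.univ \ {i0}, y k ^ 2 :=
          Finset.single_le_sum (fun k _ => sq_nonneg (y k)) hmemi
        have h2 : y i ^ 2 ≤ 1 := by nlinarith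
        constructor <;> nlinarith
    have hb : volume (Set.pi Set.univ (fun _ : Fin n => Set.Icc (-1:ℝ) 1)) < ⊤ := by
      rw [MeasureTheory.volume_pi_pi]
      simp only [Real.volume_Icc]
      rw [Finset.prod_const]
      exact ENNReal.pow_lt_top ENNReal.ofReal_lt_top
    exact ne_top_of_le_ne_top hb.ne (measure_mono hsub)
  -- put it together
  have hmap : (fun y : Fin n → ℝ => M *ᵥ y) = ⇑(Matrix.toLin' M) := by
    funext y
    rw [Matrix.toLin'_apply]
  rw [himg, hmap, MeasureTheory.Measure.addHaar_image_linearMap, LinearMap.det_toLin']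
  rw [← ENNReal.ofReal_toReal hEfin, ← ENNReal.ofReal_mul (abs_nonneg _)]
  congr 1
  -- real arithmetic
  have hST : Real.sqrt |S.det| * |T.det| = 1 := by
    have e1 : (Tᵀ * S * T).det = D.det := by rw [hdiag]
    rw [Matrix.det_mul, Matrix.det_mul, Matrix.det_transpose] at e1
    have e2 : |S.det| * |T.det| ^ 2 = 1 := by
      have := congrArg abs e1
      rw [abs_mul, abs_mul, hDdet] at this
      nlinarith [abs_nonneg S.det, abs_nonneg T.det]
    have e3 : Real.sqrt (|S.det| * |T.det| ^ 2) = 1 := by rw [e2, Real.sqrt_one]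
    rw [Real.sqrt_mul (abs_nonneg _), Real.sqrt_sq (abs_nonneg _)] at e3
    exact e3
  have hcpow : c ^ ((n : ℝ) / 2) = sq ^ n := by
    rw [show ((n : ℝ) / 2) = (1 / 2 : ℝ) * (n : ℕ) by push_cast; ring,
      Real.rpow_mul hc0.le, Real.rpow_natCast, ← Real.sqrt_eq_rpow]
  rw [hMdet, hBdetabs, mul_one, hcpow]
  have hsqrtS0 : Real.sqrt |S.det| ≠ 0 := by
    intro h0
    rw [h0, zero_mul] at hST
    norm_num at hST
  have hTdetabs : |T.det| = (Real.sqrt |S.det|)⁻¹ := by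
    field_simp at hST ⊢
    linarith
  rw [hTdetabs]
  rw [inv_pow]
  field_simp
  rw [ENNReal.toReal_ofReal ENNReal.toReal_nonneg]
end

section
/- Let d < 0 be a square-free integer, ω = √d if d ≡ 2,3 mod 4 and ω = (1+√d)/2 if d ≡ 1 mod 4. Let t ∈ ℕ, τ ∈ ℂ∖ℝ, Λ₁ = ℤ + ℤtτ ⊆ Λ₂ = ℤ + ℤτ. Suppose the multiplier rings are O₁ = {μ : μΛ₁ ⊆ Λ₁} = ℤ + ℤf₁ω and O₂ = {μ : μΛ₂ ⊆ Λ₂} = ℤ + ℤf₂ω. Then every λ ∈ ℂ with λΛ₁ ⊆ Λ₂ lies in (1/t)·(ℤ + ℤ·lcm(f₁,f₂)·ω̄). -/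
theorem hom_in_scaled_order (d : ℤ) (hd : d < 0) (hsf : Squarefree d)
    (ω : ℂ)
    (hω : ω = if d % 4 = 1 then (1 + Complex.I * Real.sqrt (-(d : ℝ))) / 2
              else Complex.I * Real.sqrt (-(d : ℝ)))
    (t : ℕ) (ht : 0 < t) (τ : ℂ) (hτ : τ.im ≠ 0)
    (f₁ f₂ : ℕ) (hf₁ : 0 < f₁) (hf₂ : 0 < f₂)
    (Λ₁ Λ₂ : Set ℂ)
    (hΛ₁ : Λ₁ = {z : ℂ | ∃ m n : ℤ, z = (m : ℂ) + (n : ℂ) * ((t : ℂ) * τ)})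
    (hΛ₂ : Λ₂ = {z : ℂ | ∃ m n : ℤ, z = (m : ℂ) + (n : ℂ) * τ})
    (hO₁ : {μ : ℂ | ∀ z ∈ Λ₁, μ * z ∈ Λ₁}
      = {z : ℂ | ∃ m n : ℤ, z = (m : ℂ) + (n : ℂ) * ((f₁ : ℂ) * ω)})
    (hO₂ : {μ : ℂ | ∀ z ∈ Λ₂, μ * z ∈ Λ₂}
      = {z : ℂ | ∃ m n : ℤ, z = (m : ℂ) + (n : ℂ) * ((f₂ : ℂ) * ω)}) :
    ∀ l : ℂ, (∀ z ∈ Λ₁, l * z ∈ Λ₂) →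
      ∃ m n : ℤ, l = ((m : ℂ) + (n : ℂ) * ((Nat.lcm f₁ f₂ : ℂ) * (starRingEnd ℂ) ω)) / t := by
  intro l hl
  -- basic facts about ω
  have hdpos : (0:ℝ) < -(d:ℝ) := by
    have : (d:ℝ) < 0 := by exact_mod_cast hd
    linarith
  have hsq : 0 < Real.sqrt (-(d:ℝ)) := Real.sqrt_pos.mpr hdpos
  have hωim : ω.im ≠ 0 := by
    rw [hω]
    split
    · simp [Complex.div_im]
      exact ne_of_gt hsq
    · simp
      exact ne_of_gt hsq
  -- t*l ∈ O₁
  have h1 : (t:ℂ) * l ∈ {μ : ℂ | ∀ z ∈ Λ₁, μ * z ∈ Λ₁} := by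
    intro z hz
    have hz2 := hl z hz
    rw [hΛ₂] at hz2
    obtain ⟨m, n, hmn⟩ := hz2
    rw [hΛ₁]
    refine ⟨(t:ℤ) * m, n, ?_⟩
    have : (t:ℂ) * l * z = (t:ℂ) * (l * z) := by ring
    rw [this, hmn]
    push_cast
    ring
  -- t*l ∈ O₂
  have h2 : (t:ℂ) * l ∈ {μ : ℂ | ∀ z ∈ Λ₂, μ * z ∈ Λ₂} := by
    intro z hz
    rw [hΛ₂] at hz
    obtain ⟨m, n, hmn⟩ := hz
    have htz : (t:ℂ) * z ∈ Λ₁ := by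
      rw [hΛ₁]
      refine ⟨(t:ℤ) * m, n, ?_⟩
      rw [hmn]; push_cast; ring
    have := hl _ htz
    have heq : (t:ℂ) * l * z = l * ((t:ℂ) * z) := by ring
    rw [heq]
    exact this
  rw [hO₁] at h1
  rw [hO₂] at h2
  obtain ⟨a, b, hab⟩ := h1
  obtain ⟨a', b', hab'⟩ := h2
  -- compare imaginary parts
  have heq : (a:ℂ) + (b:ℂ) * ((f₁:ℂ) * ω) = (a':ℂ) + (b':ℂ) * ((f₂:ℂ) * ω) := by
    rw [← hab, ← hab']
  have him : ((b:ℝ) * (f₁:ℝ)) * ω.im = ((b':ℝ) * (f₂:ℝ)) * ω.im := by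
    have h := congrArg Complex.im heq
    simp [Complex.add_im, Complex.mul_im] at h
    linear_combination h
  have hbb : (b:ℝ) * (f₁:ℝ) = (b':ℝ) * (f₂:ℝ) :=
    mul_right_cancel₀ hωim him
  have hbbz : b * (f₁:ℤ) = b' * (f₂:ℤ) := by exact_mod_cast hbb
  -- lcm divides b * f₁
  have hdvd : ((Nat.lcm f₁ f₂ : ℤ)) ∣ b * (f₁:ℤ) := by
    have h1d : (f₁:ℤ) ∣ b * (f₁:ℤ) := ⟨b, by ring⟩
    have h2d : (f₂:ℤ) ∣ b * (f₁:ℤ) := by rw [hbbz]; exact ⟨b', by ring⟩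
    have := Int.coe_lcm_dvd h1d h2d
    simpa [Int.lcm] using this
  obtain ⟨k, hk⟩ := hdvd
  -- conjugate of ω
  set s : ℤ := if d % 4 = 1 then 1 else 0 with hs
  have hconj : (starRingEnd ℂ) ω = (s:ℂ) - ω := by
    rw [hω, hs]
    split
    · push_cast
      simp only [map_div₀, map_add, map_one, map_mul, map_ofNat, Complex.conj_I,
        Complex.conj_ofReal]
      ring
    · push_cast
      simp [Complex.conj_I, Complex.conj_ofReal]
  -- conclude
  refine ⟨a + k * (Nat.lcm f₁ f₂ : ℤ) * s, -k, ?_⟩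
  have htne : (t:ℂ) ≠ 0 := by exact_mod_cast ht.ne'
  rw [eq_div_iff htne]
  have hk' : (b:ℂ) * (f₁:ℂ) = (Nat.lcm f₁ f₂ : ℂ) * (k:ℂ) := by exact_mod_cast hk
  rw [hconj]
  push_cast
  linear_combination hab + ω * hk'
end

section
/- Let d < 0 square-free, ω as above, f₁, f₂ positive integers, t ∈ ℕ, τ ∈ ℂ∖ℝ, with Λ₁ = ℤ + ℤtτ ⊆ Λ₂ = ℤ + ℤτ and multiplier rings ℤ + ℤfᵢω. If Hom(Λ₁,Λ₂) = ℤ + ℤσ, then |Im(σ)| = lcm(f₁,f₂)·|Im(ω)| / t. -/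
lemma coeff_eq_int {τ : ℂ} (hτ : τ.im ≠ 0) {m n m' n' : ℤ}
    (h : (m:ℂ) + n*τ = m' + n'*τ) : m = m' ∧ n = n' := by
  have him := congrArg Complex.im h
  have hre := congrArg Complex.re h
  simp [Complex.add_im, Complex.add_re, Complex.mul_im, Complex.mul_re] at him hre
  have hn : n = n' := by
    rcases him with h1 | h1
    · exact_mod_cast h1
    · exact absurd h1 hτ
  subst hn
  refine ⟨?_, rfl⟩
  have : (m:ℝ) = m' := by linarith
  exact_mod_cast this

lemma key_nat (t f₁ f₂ B B1 Q M : ℕ) (hB : 0 < B) (hf₂ : 0 < f₂)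
    (hQ : Q * Nat.gcd B t = B)
    (hB1 : B1 * Nat.gcd B (t * M) = B)
    (hstar : f₁ * B = B1 * (t * f₂)) :
    Q * t * f₂ = Nat.lcm f₁ f₂ * B := by
  set G := Nat.gcd B t with hG
  set W := Nat.gcd B (t * M) with hWdef
  have hW0 : 0 < W := by
    rcases Nat.eq_zero_or_pos W with h | h
    · rw [h, Nat.mul_zero] at hB1; omega
    · exact h
  have hB10 : 0 < B1 := by
    rcases Nat.eq_zero_or_pos B1 with h | h
    · rw [h, Nat.zero_mul] at hB1; omega
    · exact h
  have hfW : f₁ * W = t * f₂ := by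
    have h1 : B1 * (f₁ * W) = B1 * (t * f₂) := by
      rw [← hstar, ← hB1]; ring
    exact Nat.eq_of_mul_eq_mul_left hB10 h1
  have hGW : Nat.gcd t W = G := by
    apply Nat.dvd_antisymm
    · exact Nat.dvd_gcd (dvd_trans (Nat.gcd_dvd_right t W)
        (Nat.gcd_dvd_left B (t*M))) (Nat.gcd_dvd_left t W)
    · exact Nat.dvd_gcd (Nat.gcd_dvd_right B t)
        (Nat.dvd_gcd (Nat.gcd_dvd_left B t)
          (dvd_trans (Nat.gcd_dvd_right B t) (dvd_mul_right t M)))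
  have hgcdf : Nat.gcd f₁ f₂ * W = f₂ * G := by
    rw [← Nat.gcd_mul_right, hfW, ← hGW, Nat.mul_comm t f₂, Nat.gcd_mul_left]
  have hlcm : Nat.gcd f₁ f₂ * Nat.lcm f₁ f₂ = f₁ * f₂ := Nat.gcd_mul_lcm f₁ f₂
  have hpos : 0 < Nat.gcd f₁ f₂ * W := Nat.mul_pos (Nat.gcd_pos_of_pos_right f₁ hf₂) hW0
  apply Nat.eq_of_mul_eq_mul_right hpos
  have main : ((Q:ℤ) * t * f₂) * ((Nat.gcd f₁ f₂ : ℤ) * W) = ((Nat.lcm f₁ f₂ : ℤ) * B) * ((Nat.gcd f₁ f₂ : ℤ) * W) := by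
    have r1 : (Q:ℤ) * G = B := by exact_mod_cast hQ
    have r2 : (f₁:ℤ) * W = t * f₂ := by exact_mod_cast hfW
    have r3 : (Nat.gcd f₁ f₂ : ℤ) * W = f₂ * G := by exact_mod_cast hgcdf
    have r4 : (Nat.gcd f₁ f₂ : ℤ) * Nat.lcm f₁ f₂ = f₁ * f₂ := by exact_mod_cast hlcm
    linear_combination ((Q:ℤ)*t*f₂) * r3 + ((t:ℤ)*f₂*f₂) * r1 - ((B:ℤ)*f₂) * r2 - ((B:ℤ)*W) * r4
  exact_mod_cast main

lemma gen_eq {b q : ℤ} (s : ℕ) (hb : b ≠ 0)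
    (h : ∀ k : ℤ, q ∣ k ↔ b ∣ k * (s:ℤ)) :
    q.natAbs * Nat.gcd b.natAbs s = b.natAbs := by
  set B := b.natAbs with hB
  set G := Nat.gcd B s with hG
  have hBpos : 0 < B := Int.natAbs_pos.mpr hb
  have hGpos : 0 < G := Nat.gcd_pos_of_pos_left s hBpos
  have hGB : G ∣ B := Nat.gcd_dvd_left B s
  have hGs : G ∣ s := Nat.gcd_dvd_right B s
  -- part 1 : q ∣ B/G
  have hq1 : q ∣ ((B / G : ℕ) : ℤ) := by
    apply (h _).mpr
    have hnat : B ∣ (B / G) * s := by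
      have heq : (B / G) * s = B * (s / G) := by
        calc (B / G) * s = (B / G) * (G * (s / G)) := by rw [Nat.mul_div_cancel' hGs]
          _ = ((B / G) * G) * (s / G) := by ring
          _ = B * (s / G) := by rw [Nat.div_mul_cancel hGB]
      rw [heq]
      exact Dvd.intro (s / G) (by ring)
    have : b ∣ ((B : ℕ) : ℤ) := Int.dvd_natAbs.mpr dvd_rfl
    calc b ∣ ((B : ℕ) : ℤ) := this
      _ ∣ (((B / G) * s : ℕ) : ℤ) := Int.natCast_dvd_natCast.mpr hnat
      _ = ((B / G : ℕ) : ℤ) * (s : ℤ) := by push_cast; ring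
  have hq1' : q.natAbs ∣ B / G := by
    have h' := Int.natAbs_dvd_natAbs.mpr hq1
    rwa [Int.natAbs_natCast] at h'
  -- part 2 : B/G ∣ q.natAbs
  have hq2 : B / G ∣ q.natAbs := by
    have hd : b ∣ q * (s:ℤ) := (h q).mp dvd_rfl
    have hnat : B ∣ q.natAbs * s := by
      have := Int.natAbs_dvd_natAbs.mpr hd
      simpa [Int.natAbs_mul] using this
    have hco : Nat.Coprime (B / G) (s / G) := Nat.coprime_div_gcd_div_gcd hGpos
    have h2 : (B / G) ∣ q.natAbs * (s / G) := by
      have hG' : G ≠ 0 := hGpos.ne'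
      have : G * (B / G) ∣ q.natAbs * (G * (s / G)) := by
        rw [Nat.mul_div_cancel' hGB, Nat.mul_div_cancel' hGs]; exact hnat
      rw [show q.natAbs * (G * (s / G)) = G * (q.natAbs * (s / G)) by ring] at this
      exact (mul_dvd_mul_iff_left hG').mp this
    exact hco.dvd_of_dvd_mul_right h2
  have : q.natAbs = B / G := Nat.dvd_antisymm hq1' hq2
  rw [this, Nat.div_mul_cancel hGB]

theorem im_of_second_generator (d : ℤ) (hd : d < 0) (hsf : Squarefree d)
    (ω : ℂ)
    (hω : ω = if d % 4 = 1 then (1 + Complex.I * Real.sqrt (-(d : ℝ))) / 2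
              else Complex.I * Real.sqrt (-(d : ℝ)))
    (t : ℕ) (ht : 0 < t) (τ : ℂ) (hτ : τ.im ≠ 0)
    (f₁ f₂ : ℕ) (hf₁ : 0 < f₁) (hf₂ : 0 < f₂)
    (Λ₁ Λ₂ : Set ℂ)
    (hΛ₁ : Λ₁ = {z : ℂ | ∃ m n : ℤ, z = (m : ℂ) + (n : ℂ) * ((t : ℂ) * τ)})
    (hΛ₂ : Λ₂ = {z : ℂ | ∃ m n : ℤ, z = (m : ℂ) + (n : ℂ) * τ})
    (hO₁ : {μ : ℂ | ∀ z ∈ Λ₁, μ * z ∈ Λ₁}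
      = {z : ℂ | ∃ m n : ℤ, z = (m : ℂ) + (n : ℂ) * ((f₁ : ℂ) * ω)})
    (hO₂ : {μ : ℂ | ∀ z ∈ Λ₂, μ * z ∈ Λ₂}
      = {z : ℂ | ∃ m n : ℤ, z = (m : ℂ) + (n : ℂ) * ((f₂ : ℂ) * ω)})
    (σ : ℂ)
    (hHom : {l : ℂ | ∀ z ∈ Λ₁, l * z ∈ Λ₂}
      = {z : ℂ | ∃ m n : ℤ, z = (m : ℂ) + (n : ℂ) * σ}) :
    |σ.im| = (Nat.lcm f₁ f₂ : ℝ) * |ω.im| / t := by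
  -- ω has nonzero imaginary part
  have hdR : (0:ℝ) < -(d:ℝ) := by
    have : (d:ℝ) < 0 := by exact_mod_cast hd
    linarith
  have hsq : 0 < Real.sqrt (-(d:ℝ)) := Real.sqrt_pos.mpr hdR
  have hωim : ω.im ≠ 0 := by
    rw [hω]; split_ifs <;>
      simp [Complex.add_im, Complex.div_im, Complex.mul_im] <;> positivity
  have htZ : (t:ℤ) ≠ 0 := by exact_mod_cast ht.ne'
  have htR : (t:ℝ) ≠ 0 := by exact_mod_cast ht.ne'
  -- basic memberships
  have h1Λ₁ : (1:ℂ) ∈ Λ₁ := by rw [hΛ₁]; exact ⟨1, 0, by norm_num⟩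
  have htτΛ₁ : (t:ℂ) * τ ∈ Λ₁ := by rw [hΛ₁]; exact ⟨0, 1, by norm_num⟩
  have h1Λ₂ : (1:ℂ) ∈ Λ₂ := by rw [hΛ₂]; exact ⟨1, 0, by norm_num⟩
  have hτΛ₂ : τ ∈ Λ₂ := by rw [hΛ₂]; exact ⟨0, 1, by norm_num⟩
  -- f₂ω is a multiplier of Λ₂
  have hf₂m : ∀ z ∈ Λ₂, ((f₂:ℂ) * ω) * z ∈ Λ₂ := by
    have : ((f₂:ℂ) * ω) ∈ {z : ℂ | ∃ m n : ℤ, z = (m : ℂ) + (n : ℂ) * ((f₂ : ℂ) * ω)} :=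
      ⟨0, 1, by norm_num⟩
    rw [← hO₂] at this; exact this
  obtain ⟨a₂, b₂, hab⟩ : ∃ a₂ b₂ : ℤ, (f₂:ℂ) * ω = a₂ + b₂ * τ := by
    have := hf₂m 1 h1Λ₂; rw [hΛ₂] at this
    obtain ⟨m, n, h⟩ := this; exact ⟨m, n, by rw [← h]; ring⟩
  obtain ⟨c, e, hce⟩ : ∃ c e : ℤ, ((f₂:ℂ) * ω) * τ = c + e * τ := by
    have := hf₂m τ hτΛ₂; rw [hΛ₂] at this; exact this
  -- f₁ω is a multiplier of Λ₁
  have hf₁m : ∀ z ∈ Λ₁, ((f₁:ℂ) * ω) * z ∈ Λ₁ := by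
    have : ((f₁:ℂ) * ω) ∈ {z : ℂ | ∃ m n : ℤ, z = (m : ℂ) + (n : ℂ) * ((f₁ : ℂ) * ω)} :=
      ⟨0, 1, by norm_num⟩
    rw [← hO₁] at this; exact this
  obtain ⟨a₁, b₁, hab1⟩ : ∃ a₁ b₁ : ℤ, (f₁:ℂ) * ω = a₁ + b₁ * ((t:ℂ) * τ) := by
    have := hf₁m 1 h1Λ₁; rw [hΛ₁] at this
    obtain ⟨m, n, h⟩ := this; exact ⟨m, n, by rw [← h]; ring⟩
  -- σ maps Λ₁ to Λ₂
  have hσm : ∀ z ∈ Λ₁, σ * z ∈ Λ₂ := by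
    have : σ ∈ {z : ℂ | ∃ m n : ℤ, z = (m : ℂ) + (n : ℂ) * σ} := ⟨0, 1, by norm_num⟩
    rw [← hHom] at this; exact this
  obtain ⟨p, q, hpq⟩ : ∃ p q : ℤ, σ = p + q * τ := by
    have := hσm 1 h1Λ₁; rw [hΛ₂] at this
    obtain ⟨m, n, h⟩ := this; exact ⟨m, n, by rw [← h]; ring⟩
  -- the key quadratic relation
  have hττ : (b₂:ℂ) * τ^2 = c + (e - a₂ : ℤ) * τ := by
    push_cast; linear_combination hce - τ * hab
  set E : ℤ := e - a₂ with hE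
  -- imaginary parts
  have him2 : (f₂:ℝ) * ω.im = b₂ * τ.im := by
    have := congrArg Complex.im hab
    simpa [Complex.add_im, Complex.mul_im] using this
  have him1 : (f₁:ℝ) * ω.im = b₁ * (t * τ.im) := by
    have := congrArg Complex.im hab1
    simpa [Complex.add_im, Complex.mul_im, Complex.mul_re] using this
  have himσ : σ.im = q * τ.im := by
    have := congrArg Complex.im hpq
    simpa [Complex.add_im, Complex.mul_im] using this
  have hb₂ : b₂ ≠ 0 := by
    rintro rfl
    simp only [Int.cast_zero, zero_mul] at him2
    rcases mul_eq_zero.mp him2 with h | h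
    · exact absurd h (by exact_mod_cast hf₂.ne')
    · exact hωim h
  have hb₂C : (b₂:ℂ) ≠ 0 := by exact_mod_cast hb₂
  have hstar : (f₁:ℤ) * b₂ = b₁ * t * f₂ := by
    have hR : (f₁:ℝ) * b₂ * ω.im = (b₁ * t * f₂ : ℝ) * ω.im := by
      linear_combination (b₂:ℝ) * him1 - (b₁:ℝ) * (t:ℝ) * him2
    have := mul_right_cancel₀ hωim hR
    exact_mod_cast this

  -- O₂ exactness gives coprimality
  have Hcop : ∀ k : ℤ, b₂ ∣ k * c → b₂ ∣ k * E → b₂ ∣ k := by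
    intro k h1 h2
    obtain ⟨v, hv⟩ := h1
    obtain ⟨u, hu⟩ := h2
    have hmem : (k:ℂ) * τ ∈ {μ : ℂ | ∀ z ∈ Λ₂, μ * z ∈ Λ₂} := by
      intro z hz
      rw [hΛ₂] at hz ⊢
      obtain ⟨M, N, rfl⟩ := hz
      refine ⟨v * N, k * M + u * N, ?_⟩
      apply mul_left_cancel₀ hb₂C
      have hvC : (k:ℂ) * c = b₂ * v := by exact_mod_cast hv
      have huC : (k:ℂ) * E = b₂ * u := by exact_mod_cast hu
      push_cast
      linear_combination ((k:ℂ) * N) * hττ + (N:ℂ) * hvC + ((N:ℂ) * τ) * huC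
    rw [hO₂] at hmem
    obtain ⟨m', n', h'⟩ := hmem
    have h'' : ((0:ℤ):ℂ) + (k:ℂ) * τ = ((m' + n' * a₂ : ℤ):ℂ) + ((n' * b₂ : ℤ):ℂ) * τ := by
      push_cast
      linear_combination h' + (n':ℂ) * hab
    exact Dvd.intro_left n' ((coeff_eq_int hτ h'').2).symm
  -- forward divisibility for q
  have HqF : ∀ k : ℤ, q ∣ k → b₂ ∣ k * t * c ∧ b₂ ∣ k * t * E := by
    rintro k ⟨j, rfl⟩
    have hjσ : ∀ z ∈ Λ₁, ((j:ℂ) * σ) * z ∈ Λ₂ := by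
      have : ((j:ℂ) * σ) ∈ {z : ℂ | ∃ m n : ℤ, z = (m:ℂ) + (n:ℂ) * σ} :=
        ⟨0, j, by norm_num⟩
      rw [← hHom] at this; exact this
    have hm := hjσ _ htτΛ₁
    rw [hΛ₂] at hm
    obtain ⟨M, N, hMN⟩ := hm
    have h'' : ((b₂ * M:ℤ):ℂ) + ((b₂ * N:ℤ):ℂ) * τ
        = ((q * j * t * c:ℤ):ℂ) + ((q * j * t * E + j * p * t * b₂:ℤ):ℂ) * τ := by
      push_cast
      linear_combination (-(b₂:ℂ)) * hMN + ((j:ℂ) * t * b₂ * τ) * hpq + ((j:ℂ) * t * q) * hττ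
    obtain ⟨h1, h2⟩ := coeff_eq_int hτ h''
    constructor
    · exact ⟨M, h1.symm⟩
    · exact ⟨N - j * p * t, by linear_combination -h2⟩
  -- the iff for q
  have Hq : ∀ k : ℤ, q ∣ k ↔ b₂ ∣ k * (t:ℤ) := by
    intro k
    constructor
    · intro hk
      obtain ⟨h1, h2⟩ := HqF k hk
      exact Hcop (k * t) h1 h2
    · intro hkt
      have h1 : b₂ ∣ k * t * c := hkt.mul_right c
      have h2 : b₂ ∣ k * t * E := hkt.mul_right E
      obtain ⟨v, hv⟩ := h1
      obtain ⟨u, hu⟩ := h2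
      have hmem : (k:ℂ) * τ ∈ {l : ℂ | ∀ z ∈ Λ₁, l * z ∈ Λ₂} := by
        intro z hz
        rw [hΛ₁] at hz; rw [hΛ₂]
        obtain ⟨M, N, rfl⟩ := hz
        refine ⟨v * N, k * M + u * N, ?_⟩
        apply mul_left_cancel₀ hb₂C
        have hvC : (k:ℂ) * t * c = b₂ * v := by exact_mod_cast hv
        have huC : (k:ℂ) * t * E = b₂ * u := by exact_mod_cast hu
        push_cast
        linear_combination ((k:ℂ) * N * t) * hττ + (N:ℂ) * hvC + ((N:ℂ) * τ) * huC
      rw [hHom] at hmem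
      obtain ⟨m', n', h'⟩ := hmem
      have h'' : ((0:ℤ):ℂ) + (k:ℂ) * τ = ((m' + n' * p:ℤ):ℂ) + ((n' * q:ℤ):ℂ) * τ := by
        push_cast
        linear_combination h' + (n':ℂ) * hpq
      exact Dvd.intro_left n' ((coeff_eq_int hτ h'').2).symm
  -- forward divisibility for b₁
  have HbF : ∀ k : ℤ, b₁ ∣ k → b₂ ∣ k * t * t * c ∧ b₂ ∣ k * t * E := by
    rintro k ⟨j, rfl⟩
    have hjm : ∀ z ∈ Λ₁, ((j:ℂ) * ((f₁:ℂ) * ω)) * z ∈ Λ₁ := by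
      have : ((j:ℂ) * ((f₁:ℂ) * ω)) ∈ {z : ℂ | ∃ m n : ℤ, z = (m:ℂ) + (n:ℂ) * ((f₁:ℂ) * ω)} :=
        ⟨0, j, by norm_num⟩
      rw [← hO₁] at this; exact this
    have hm := hjm _ htτΛ₁
    rw [hΛ₁] at hm
    obtain ⟨M, N, hMN⟩ := hm
    have h'' : ((b₂ * M:ℤ):ℂ) + ((b₂ * N * t:ℤ):ℂ) * τ
        = ((b₁ * j * t * t * c:ℤ):ℂ) + ((j * a₁ * t * b₂ + b₁ * j * t * t * E:ℤ):ℂ) * τ := by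
      push_cast
      linear_combination (-(b₂:ℂ)) * hMN + ((j:ℂ) * t * b₂ * τ) * hab1 + ((j:ℂ) * t * t * b₁) * hττ
    obtain ⟨h1, h2⟩ := coeff_eq_int hτ h''
    constructor
    · exact ⟨M, h1.symm⟩
    · have h3 : (b₂ * N) * t = (j * a₁ * b₂ + b₁ * j * t * E) * t := by linear_combination h2
      have h4 := mul_right_cancel₀ htZ h3
      exact ⟨N - j * a₁, by linear_combination -h4⟩
  -- backward divisibility for b₁
  have HbB : ∀ k : ℤ, b₂ ∣ k * t * t * c → b₂ ∣ k * t * E → b₁ ∣ k := by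
    intro k h1 h2
    obtain ⟨v, hv⟩ := h1
    obtain ⟨u, hu⟩ := h2
    have hmem : ((k * t:ℤ):ℂ) * τ ∈ {μ : ℂ | ∀ z ∈ Λ₁, μ * z ∈ Λ₁} := by
      intro z hz
      rw [hΛ₁] at hz ⊢
      obtain ⟨M, N, rfl⟩ := hz
      refine ⟨v * N, k * M + u * N, ?_⟩
      apply mul_left_cancel₀ hb₂C
      have hvC : (k:ℂ) * t * t * c = b₂ * v := by exact_mod_cast hv
      have huC : (k:ℂ) * t * E = b₂ * u := by exact_mod_cast hu
      push_cast
      linear_combination ((k:ℂ) * N * t * t) * hττ + (N:ℂ) * hvC + ((N:ℂ) * t * τ) * huC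
    rw [hO₁] at hmem
    obtain ⟨m', n', h'⟩ := hmem
    have h'' : ((0:ℤ):ℂ) + ((k * t:ℤ):ℂ) * τ = ((m' + n' * a₁:ℤ):ℂ) + ((n' * b₁ * t:ℤ):ℂ) * τ := by
      push_cast
      push_cast at h'
      linear_combination h' + (n':ℂ) * hab1
    have h2' := (coeff_eq_int hτ h'').2
    have h3 : k = n' * b₁ := by
      have h5 : k * t = (n' * b₁) * t := by linear_combination h2'
      exact mul_right_cancel₀ htZ h5
    exact Dvd.intro_left n' h3.symm
  -- the iff for b₁
  set M' : ℕ := Int.gcd (t * c) E with hM'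
  have Hb1 : ∀ k : ℤ, b₁ ∣ k ↔ b₂ ∣ k * ((t * M' : ℕ):ℤ) := by
    intro k
    constructor
    · intro hk
      obtain ⟨h1, h2⟩ := HbF k hk
      have hbez : (M' : ℤ) = ((t:ℤ) * c) * Int.gcdA ((t:ℤ) * c) E + E * Int.gcdB ((t:ℤ) * c) E :=
        Int.gcd_eq_gcd_ab _ _
      have heq : k * ((t * M' : ℕ):ℤ)
          = (k * t * t * c) * Int.gcdA ((t:ℤ) * c) E + (k * t * E) * Int.gcdB ((t:ℤ) * c) E := by
        push_cast
        linear_combination (k * (t:ℤ)) * hbez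
      rw [heq]
      exact dvd_add (h1.mul_right _) (h2.mul_right _)
    · intro hk
      obtain ⟨w1, hw1⟩ : (M' : ℤ) ∣ (t:ℤ) * c := Int.gcd_dvd_left _ _
      obtain ⟨w2, hw2⟩ : (M' : ℤ) ∣ E := Int.gcd_dvd_right _ _
      apply HbB
      · have heq : k * t * t * c = (k * ((t * M' : ℕ):ℤ)) * w1 := by
          push_cast
          linear_combination (k * (t:ℤ)) * hw1
        rw [heq]; exact hk.mul_right _
      · have heq : k * t * E = (k * ((t * M' : ℕ):ℤ)) * w2 := by
          push_cast
          linear_combination (k * (t:ℤ)) * hw2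
        rw [heq]; exact hk.mul_right _
  -- extract the nat identities
  have hQnat : q.natAbs * Nat.gcd b₂.natAbs t = b₂.natAbs := gen_eq t hb₂ Hq
  have hB1nat : b₁.natAbs * Nat.gcd b₂.natAbs (t * M') = b₂.natAbs := gen_eq (t * M') hb₂ Hb1
  have hstarN : f₁ * b₂.natAbs = b₁.natAbs * (t * f₂) := by
    have h := congrArg Int.natAbs hstar
    simpa [Int.natAbs_mul, Nat.mul_assoc] using h
  have hBpos : 0 < b₂.natAbs := Int.natAbs_pos.mpr hb₂
  have key := key_nat t f₁ f₂ b₂.natAbs b₁.natAbs q.natAbs M' hBpos hf₂ hQnat hB1nat hstarN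
  -- final real computation
  have hmainR : (q.natAbs : ℝ) * t * f₂ = (Nat.lcm f₁ f₂ : ℝ) * b₂.natAbs := by exact_mod_cast key
  have habs : (f₂:ℝ) * |ω.im| = (b₂.natAbs : ℝ) * |τ.im| := by
    have h := congrArg abs him2
    rw [abs_mul, abs_mul] at h
    rw [abs_of_nonneg (by positivity : (0:ℝ) ≤ (f₂:ℝ))] at h
    rw [show |((b₂:ℤ):ℝ)| = ((b₂.natAbs : ℕ):ℝ) by rw [Nat.cast_natAbs, Int.cast_abs]] at h
    exact h
  have hσabs : |σ.im| = (q.natAbs : ℝ) * |τ.im| := by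
    rw [himσ, abs_mul]
    rw [show |((q:ℤ):ℝ)| = ((q.natAbs : ℕ):ℝ) by rw [Nat.cast_natAbs, Int.cast_abs]]
  rw [hσabs, eq_div_iff htR]
  have hf₂R : (f₂:ℝ) ≠ 0 := by exact_mod_cast hf₂.ne'
  apply mul_right_cancel₀ hf₂R
  linear_combination |τ.im| * hmainR - (Nat.lcm f₁ f₂ : ℝ) * habs
end
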